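/- In the semidirect product G = F ⋊_φ Q8 as above, the non-trivial torsion of G is exactly {2, 4}: every element of finite order > 1 has order 2 or 4, and elements of both orders exist. -/

import Mathlib

open List

private abbrev R {α : Type*} (a b : α × Bool) : Prop := ¬(a.1 = b.1 ∧ a.2 = !b.2)

private lemma reduce_eq_self_of_chain' {α : Type*} [DecidableEq α] {L : List (α × Bool)}
    (h : List.Chain' R L) : FreeGroup.reduce L = L := by
  induction L with
  | nil => rfl
  | cons a L ih =>
    have hL : FreeGroup.reduce L = L := ih h.tail
    rw [FreeGroup.reduce.cons, hL]
    cases L with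
    | nil => rfl
    | cons b M =>
      simp only
      rw [if_neg (List.isChain_cons_cons.mp h).1]

private lemma chain'_of_reduce_eq_self {α : Type*} [DecidableEq α] {L : List (α × Bool)}
    (h : FreeGroup.reduce L = L) : List.Chain' R L := by
  induction L with
  | nil => exact List.isChain_nil
  | cons a L ih =>
    rw [FreeGroup.reduce.cons] at h
    cases r : FreeGroup.reduce L with
    | nil =>
      simp only [r] at h
      injection h with _ h2
      subst h2
      exact List.isChain_singleton _
    | cons hd tl =>
      simp only [r] at h
      by_cases c : a.1 = hd.1 ∧ a.2 = !hd.2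
      · rw [if_pos c] at h
        have h1 : (FreeGroup.reduce L).length ≤ L.length := (FreeGroup.reduce.red).length_le
        rw [r] at h1
        have h2 := congrArg List.length h
        simp at h1 h2
        omega
      · rw [if_neg c] at h
        obtain ⟨-, rfl⟩ := (List.cons.injEq _ _ _ _).mp h
        exact List.isChain_cons_cons.mpr ⟨c, ih r⟩

private lemma chain'_flatten_replicate {α : Type*} {L : List (α × Bool)} (hL : L ≠ [])
    (h : List.Chain' R L) (hcyc : ∀ x ∈ L.getLast?, ∀ y ∈ L.head?, R x y) :
    ∀ n : ℕ, List.Chain' R ((List.replicate (n+1) L).flatten) ∧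
      ((List.replicate (n+1) L).flatten).head? = L.head? := by
  intro n
  induction n with
  | zero => simp [h]
  | succ n ih =>
    have hrw : (List.replicate (n+2) L).flatten = L ++ (List.replicate (n+1) L).flatten := by
      rw [List.replicate_succ, List.flatten_cons]
    constructor
    · rw [hrw]
      refine List.isChain_append.mpr ⟨h, ih.1, ?_⟩
      intro x hx y hy
      rw [ih.2] at hy
      exact hcyc x hx y hy
    · rw [hrw, List.head?_append_of_ne_nil _ hL]

private lemma freeGroup_torsion_aux {α : Type*} [DecidableEq α] :
    ∀ k : ℕ, ∀ w : FreeGroup α, w.norm = k → ∀ n : ℕ, n ≠ 0 → w ^ n = 1 → w = 1 := by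
  intro k
  induction k using Nat.strong_induction_on with
  | _ k ih =>
    intro w hk n hn hpow
    by_cases hnil : w.toWord = []
    · exact FreeGroup.toWord_eq_nil_iff.mp hnil
    have hred : FreeGroup.reduce w.toWord = w.toWord := FreeGroup.reduce_toWord w
    have hchain : List.Chain' R w.toWord := chain'_of_reduce_eq_self hred
    have hw : FreeGroup.mk w.toWord = w := FreeGroup.mk_toWord
    by_cases hcyc : ∀ x ∈ w.toWord.getLast?, ∀ y ∈ w.toWord.head?, R x y
    · -- cyclically reduced: w ^ n ≠ 1, contradiction
      exfalso
      obtain ⟨m, rfl⟩ : ∃ m, n = m + 1 := ⟨n - 1, by omega⟩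
      have := chain'_flatten_replicate hnil hchain hcyc m
      have hwn : w ^ (m+1) = FreeGroup.mk ((List.replicate (m+1) w.toWord).flatten) := by
        conv_lhs => rw [← hw]
        rw [FreeGroup.pow_mk]
      have h1 : (w ^ (m+1)).toWord = (List.replicate (m+1) w.toWord).flatten := by
        rw [hwn, FreeGroup.toWord_mk, reduce_eq_self_of_chain' this.1]
      have h2 : (w ^ (m+1)).toWord = [] := by rw [hpow]; rfl
      rw [h2] at h1
      have : w.toWord.head? = none := by rw [← this.2, ← h1]; rfl
      exact hnil (List.head?_eq_none_iff.mp this)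
    · push_neg at hcyc
      obtain ⟨x, hx, y, hy, hxy⟩ := hcyc
      obtain ⟨a, M, hL⟩ := List.exists_cons_of_ne_nil hnil
      have hy' : y = a := by rw [hL] at hy; simp at hy; exact hy.symm
      rcases List.eq_nil_or_concat M with rfl | ⟨M', c, rfl⟩
      · -- L = [a] : getLast = a, contradiction a.2 = !a.2
        rw [hL] at hx
        simp at hx
        rw [hy', hx] at hxy
        simp at hxy
      · simp only [List.concat_eq_append] at hL
        have hx' : x = c := by
          rw [hL] at hx
          have hg : (a :: (M' ++ [c])).getLast? = some c := by
            rw [show a :: (M' ++ [c]) = (a :: M') ++ [c] by simp, List.getLast?_concat]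
          rw [hg] at hx
          simp at hx
          exact hx.symm
        rw [hx', hy'] at hxy
        -- c = (a.1, !a.2), so w = u * v * u⁻¹ with u = mk [a], v = mk M'
        have hc : c = (a.1, !a.2) := by
          obtain ⟨h1, h2⟩ := hxy
          cases c; cases a
          simp_all
        have hwdecomp : w = FreeGroup.mk [a] * FreeGroup.mk M' * (FreeGroup.mk [a])⁻¹ := by
          rw [FreeGroup.inv_mk, FreeGroup.mul_mk, FreeGroup.mul_mk, ← hw, hL, hc]
          simp [FreeGroup.invRev]
        have hvpow : (FreeGroup.mk M') ^ n = 1 := by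
          have := hpow
          rw [hwdecomp, conj_pow] at this
          have h2 : FreeGroup.mk [a] * (FreeGroup.mk M') ^ n * (FreeGroup.mk [a])⁻¹
              = FreeGroup.mk [a] * 1 * (FreeGroup.mk [a])⁻¹ := by
            rw [this]; group
          exact mul_left_cancel (mul_right_cancel h2)
        have hnorm : (FreeGroup.mk M').norm < k := by
          have h1 : (FreeGroup.mk M').norm ≤ M'.length := FreeGroup.norm_mk_le
          have h2 : w.norm = w.toWord.length := by
            rw [FreeGroup.norm, hL]
          rw [hL] at h2
          simp at h2
          omega
        have hv : FreeGroup.mk M' = 1 := ih _ hnorm _ rfl n hn hvpow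
        rw [hwdecomp, hv]
        group

private lemma freeGroup_tf {α : Type*} [DecidableEq α] {f : FreeGroup α} {n : ℕ}
    (hn : n ≠ 0) (h : f ^ n = 1) : f = 1 :=
  freeGroup_torsion_aux _ f rfl n hn h

theorem stmt_15 (φ : QuaternionGroup 2 →* MulAut (FreeGroup (Fin 2)))
    (hix : φ (QuaternionGroup.a 1) (FreeGroup.of 0) = FreeGroup.of 1)
    (hiy : φ (QuaternionGroup.a 1) (FreeGroup.of 1) = FreeGroup.of 0)
    (hjx : φ (QuaternionGroup.xa 0) (FreeGroup.of 0) = (FreeGroup.of 1)⁻¹)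
    (hjy : φ (QuaternionGroup.xa 0) (FreeGroup.of 1) = (FreeGroup.of 0)⁻¹) :
    (∀ g : FreeGroup (Fin 2) ⋊[φ] QuaternionGroup 2,
      IsOfFinOrder g → g ≠ 1 → orderOf g = 2 ∨ orderOf g = 4) ∧
    (∃ g : FreeGroup (Fin 2) ⋊[φ] QuaternionGroup 2, orderOf g = 2) ∧
    (∃ g : FreeGroup (Fin 2) ⋊[φ] QuaternionGroup 2, orderOf g = 4) := by
  refine ⟨?_, ?_, ?_⟩
  · intro g hfin hg1
    set q := SemidirectProduct.rightHom g with hq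
    have hdvd1 : orderOf q ∣ orderOf g := orderOf_map_dvd _ g
    have hker : g ^ orderOf q ∈ SemidirectProduct.rightHom.ker := by
      rw [MonoidHom.mem_ker, map_pow, ← hq, pow_orderOf_eq_one]
    rw [← SemidirectProduct.range_inl_eq_ker_rightHom] at hker
    obtain ⟨f, hf⟩ := hker
    have hN : orderOf g ≠ 0 := hfin.orderOf_pos.ne'
    have hf1 : f ^ orderOf g = 1 := by
      have h2 : SemidirectProduct.inl (φ := φ) (f ^ orderOf g)
          = SemidirectProduct.inl (φ := φ) 1 := by
        rw [map_pow, hf, map_one, ← pow_mul, mul_comm, pow_mul, pow_orderOf_eq_one, one_pow]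
      exact SemidirectProduct.inl_injective h2
    have hfeq : f = 1 := freeGroup_tf hN hf1
    have hgk : g ^ orderOf q = 1 := by rw [← hf, hfeq, map_one]
    have heq : orderOf g = orderOf q :=
      Nat.dvd_antisymm (orderOf_dvd_of_pow_eq_one hgk) hdvd1
    have hq4 : orderOf g ∣ 4 := by
      rw [heq]
      have h1 := Monoid.order_dvd_exponent q
      have h2 : Monoid.exponent (QuaternionGroup 2) = 4 := by
        rw [QuaternionGroup.exponent]
        norm_num
      rwa [h2] at h1
    have hne1 : orderOf g ≠ 1 := fun h => hg1 (orderOf_eq_one_iff.mp h)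
    have h4 : (4 : ℕ) = 2 ^ 2 := by norm_num
    rw [h4] at hq4
    obtain ⟨i, hi, he⟩ := (Nat.dvd_prime_pow Nat.prime_two).mp hq4
    interval_cases i
    · rw [pow_zero] at he; exact absurd he hne1
    · left; rw [he]; norm_num
    · right; rw [he]; norm_num
  · refine ⟨SemidirectProduct.inr (QuaternionGroup.a 2), ?_⟩
    rw [orderOf_injective _ SemidirectProduct.inr_injective, QuaternionGroup.orderOf_a]
    decide
  · refine ⟨SemidirectProduct.inr (QuaternionGroup.a 1), ?_⟩
    rw [orderOf_injective _ SemidirectProduct.inr_injective, QuaternionGroup.orderOf_a_one]
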